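/- Let σ be any type and let s : σ → MvPolynomial σ ℂ be a family of polynomials such that the set {v ∈ σ : s v ≠ 0} is finite and pderiv u (s v) = pderiv v (s u) for all u, v ∈ σ. Then there exists a polynomial F ∈ MvPolynomial σ ℂ with pderiv v F = s v for all v ∈ σ. (This is the key integrability step in the proof of Theorem 4.2, producing the element t with a(n)·t = a(n)·w from the compatible family s_{ijn}(γ).) -/

import Mathlib

open MvPolynomial

/-- Coefficient formula for `pderiv`. -/
private lemma coeff_pderiv' {σ : Type*} (v : σ) (P : MvPolynomial σ ℂ) (m : σ →₀ ℕ) :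
    MvPolynomial.coeff m (MvPolynomial.pderiv v P)
      = ((m v : ℂ) + 1) * MvPolynomial.coeff (m + Finsupp.single v 1) P := by
  classical
  induction P using MvPolynomial.induction_on' with
  | add p q hp hq => simp only [map_add, coeff_add, hp, hq]; ring
  | monomial k a =>
    rw [pderiv_monomial, coeff_monomial, coeff_monomial]
    by_cases h : k = m + Finsupp.single v 1
    · subst h
      have h1 : m + Finsupp.single v 1 - Finsupp.single v 1 = m := by
        ext u
        simp [Finsupp.single_apply]
      rw [if_pos h1, if_pos rfl]
      simp only [Finsupp.add_apply, Finsupp.single_apply, if_pos rfl]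
      push_cast
      ring
    · rw [if_neg h]
      by_cases h2 : k - Finsupp.single v 1 = m
      · rw [if_pos h2]
        have hkv : k v = 0 := by
          by_contra hkv
          apply h
          ext u
          have h3 := DFunLike.congr_fun h2 u
          simp only [Finsupp.tsub_apply, Finsupp.add_apply, Finsupp.single_apply] at h3 ⊢
          rcases eq_or_ne v u with rfl | huv
          · simp at h3 ⊢; omega
          · simp [huv] at h3 ⊢; omega
        simp [hkv]
      · rw [if_neg h2]; ring

/-- If the `v`-derivative vanishes, all coefficients of monomials involving `v` vanish. -/
private lemma coeff_eq_zero_of_pderiv' {σ : Type*} {v : σ} {P : MvPolynomial σ ℂ}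
    (h : MvPolynomial.pderiv v P = 0) {k : σ →₀ ℕ} (hk : k v ≠ 0) :
    MvPolynomial.coeff k P = 0 := by
  classical
  have key := coeff_pderiv' v P (k - Finsupp.single v 1)
  have hkk : k - Finsupp.single v 1 + Finsupp.single v 1 = k := by
    ext u
    simp only [Finsupp.add_apply, Finsupp.tsub_apply, Finsupp.single_apply]
    rcases eq_or_ne v u with rfl | huv
    · simp; omega
    · simp [huv]
  rw [h, coeff_zero, hkk] at key
  have hne : (((k - Finsupp.single v 1 : σ →₀ ℕ) v : ℕ) : ℂ) + 1 ≠ 0 :=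
    Nat.cast_add_one_ne_zero _
  exact (mul_eq_zero.mp key.symm).resolve_left hne

/-- Euler-operator coefficient formula. -/
private lemma coeff_X_mul_pderiv {σ : Type*} (u : σ) (P : MvPolynomial σ ℂ) (m : σ →₀ ℕ) :
    MvPolynomial.coeff m (MvPolynomial.X u * MvPolynomial.pderiv u P)
      = (m u : ℂ) * MvPolynomial.coeff m P := by
  classical
  rw [coeff_X_mul']
  by_cases hm : u ∈ m.support
  · rw [if_pos hm, coeff_pderiv']
    have hmu : m u ≠ 0 := Finsupp.mem_support_iff.mp hm
    have hmm : m - Finsupp.single u 1 + Finsupp.single u 1 = m := by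
      ext w
      simp only [Finsupp.add_apply, Finsupp.tsub_apply, Finsupp.single_apply]
      rcases eq_or_ne u w with rfl | huw
      · simp; omega
      · simp [huw]
    rw [hmm]
    have hcast : (((m - Finsupp.single u 1 : σ →₀ ℕ) u : ℕ) : ℂ) + 1 = (m u : ℂ) := by
      have : (m - Finsupp.single u 1 : σ →₀ ℕ) u + 1 = m u := by
        rw [Finsupp.tsub_apply, Finsupp.single_apply, if_pos rfl]
        omega
      exact_mod_cast this
    rw [hcast]
  · rw [if_neg hm]
    have hmu : m u = 0 := Finsupp.notMem_support_iff.mp hm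
    rw [hmu]
    simp

/-- a compatible family `s : σ → MvPolynomial σ ℂ` of polynomials (finitely many
nonzero, with symmetric partial derivatives `∂_u (s v) = ∂_v (s u)`) is integrable: there is a
polynomial `F` with `∂_v F = s v` for all `v` (key integrability step in Theorem 4.2). -/
theorem statement2 (σ : Type*) (s : σ → MvPolynomial σ ℂ)
    (hfin : {v : σ | s v ≠ 0}.Finite)
    (hsym : ∀ u v : σ, MvPolynomial.pderiv u (s v) = MvPolynomial.pderiv v (s u)) :
    ∃ F : MvPolynomial σ ℂ, ∀ v : σ, MvPolynomial.pderiv v F = s v := by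
  classical
  set T := hfin.toFinset with hT
  have hmemT : ∀ v : σ, v ∈ T ↔ s v ≠ 0 := fun v => hfin.mem_toFinset
  set G : MvPolynomial σ ℂ := ∑ u ∈ T, MvPolynomial.X u * s u with hG
  set dT : (σ →₀ ℕ) → ℕ := fun m => ∑ u ∈ T, m u with hdT
  set F : MvPolynomial σ ℂ :=
    ∑ k ∈ G.support, MvPolynomial.monomial k ((dT k : ℂ)⁻¹ * G.coeff k) with hF
  -- coefficient formula for F
  have hcF : ∀ m : σ →₀ ℕ, F.coeff m = (dT m : ℂ)⁻¹ * G.coeff m := by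
    intro m
    rw [hF, MvPolynomial.coeff_sum]
    simp only [coeff_monomial]
    rw [Finset.sum_ite_eq' G.support m]
    by_cases hm : m ∈ G.support
    · rw [if_pos hm]
    · rw [if_neg hm, MvPolynomial.notMem_support_iff.mp hm, mul_zero]
  -- the key derivative identity for G
  have hGv : ∀ v : σ, MvPolynomial.pderiv v G
      = s v + ∑ u ∈ T, MvPolynomial.X u * MvPolynomial.pderiv u (s v) := by
    intro v
    rw [hG, map_sum]
    have hterm : ∀ u ∈ T, MvPolynomial.pderiv v (MvPolynomial.X u * s u)
        = MvPolynomial.pderiv v (MvPolynomial.X u) * s u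
          + MvPolynomial.X u * MvPolynomial.pderiv u (s v) := by
      intro u _
      rw [MvPolynomial.pderiv_mul, hsym v u]
    rw [Finset.sum_congr rfl hterm, Finset.sum_add_distrib]
    congr 1
    by_cases hv : v ∈ T
    · rw [Finset.sum_eq_single v
        (fun u _ hu => by rw [MvPolynomial.pderiv_X_of_ne hu, zero_mul])
        (fun h => absurd hv h)]
      rw [MvPolynomial.pderiv_X_self, one_mul]
    · have hsv : s v = 0 := by
        by_contra h; exact hv ((hmemT v).mpr h)
      rw [hsv]
      refine (Finset.sum_eq_zero fun u hu => ?_)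
      have huv : u ≠ v := by rintro rfl; exact hv hu
      rw [MvPolynomial.pderiv_X_of_ne huv, zero_mul]
  refine ⟨F, fun v => ?_⟩
  apply MvPolynomial.ext
  intro m
  rw [coeff_pderiv', hcF]
  by_cases hv : v ∈ T
  · -- main case
    have hdTm : dT (m + Finsupp.single v 1) = dT m + 1 := by
      rw [hdT]
      simp only [Finsupp.add_apply]
      rw [Finset.sum_add_distrib]
      congr 1
      simp only [Finsupp.single_apply]
      rw [Finset.sum_ite_eq T v (fun _ => 1), if_pos hv]
    have key : ((m v : ℂ) + 1) * G.coeff (m + Finsupp.single v 1)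
        = ((dT m : ℂ) + 1) * (s v).coeff m := by
      have h1 := coeff_pderiv' v G m
      rw [hGv v, coeff_add, MvPolynomial.coeff_sum] at h1
      have h2 : ∀ u ∈ T, MvPolynomial.coeff m (MvPolynomial.X u * MvPolynomial.pderiv u (s v))
          = (m u : ℂ) * (s v).coeff m := fun u _ => coeff_X_mul_pderiv u (s v) m
      rw [Finset.sum_congr rfl h2, ← Finset.sum_mul] at h1
      rw [← h1, hdT]
      push_cast
      ring
    have hne : ((dT m : ℂ) + 1) ≠ 0 := Nat.cast_add_one_ne_zero _
    rw [hdTm]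
    push_cast
    field_simp
    linear_combination key
  · -- v not in T : s v = 0 and G has no monomial involving v
    have hsv : s v = 0 := by
      by_contra h; exact hv ((hmemT v).mpr h)
    have hGz : G.coeff (m + Finsupp.single v 1) = 0 := by
      rw [hG, MvPolynomial.coeff_sum]
      refine Finset.sum_eq_zero fun u hu => ?_
      rw [coeff_X_mul']
      by_cases hmem : u ∈ (m + Finsupp.single v 1).support
      · rw [if_pos hmem]
        have hpd : MvPolynomial.pderiv v (s u) = 0 := by
          rw [← hsym u v, hsv, map_zero]
        apply coeff_eq_zero_of_pderiv' hpd
        have huv : u ≠ v := by rintro rfl; exact hv hu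
        rw [Finsupp.tsub_apply, Finsupp.add_apply, Finsupp.single_apply, Finsupp.single_apply,
          if_pos rfl, if_neg huv]
        omega
      · rw [if_neg hmem]
    rw [hGz, mul_zero, mul_zero, hsv, coeff_zero]
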